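/- Let (A, Con, Δ) be a normal default structure with trivial entailment. For any finite consistent sets P, Q and any extension R, if P ε R and Q ⊆ R, then (P ∪ Q) ε R. -/

import Mathlib

/-- A set is consistent if every finite subset of it lies in Con. -/
def IsCons {α : Type*} (Con : Set α → Prop) (S : Set α) : Prop :=
  ∀ X : Set α, X ⊆ S → X.Finite → Con X

/-- With trivial entailment: φ(x, S, 0) = x and
φ(x, S, i+1) = φ(x, S, i) ∪ {a | (X, a) ∈ Δ, X ⊆ φ(x, S, i), {a} ∪ S consistent}. -/
def phiT {α : Type*} (Con : Set α → Prop) (Δ : Set (Set α × α)) (x S : Set α) :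
    ℕ → Set α
  | 0 => x
  | i + 1 =>
      phiT Con Δ x S i ∪
        {a | ∃ X : Set α, (X, a) ∈ Δ ∧ X ⊆ phiT Con Δ x S i ∧ IsCons Con ({a} ∪ S)}

/-- Φ(x, S) = ⋃_{i≥0} φ(x, S, i). -/
def PhiT {α : Type*} (Con : Set α → Prop) (Δ : Set (Set α × α)) (x S : Set α) : Set α :=
  ⋃ i, phiT Con Δ x S i

/-- A consistent set y is an extension of x (x ε y) if Φ(x, y) = y. -/
def ExtT {α : Type*} (Con : Set α → Prop) (Δ : Set (Set α × α)) (x y : Set α) : Prop :=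
  IsCons Con y ∧ PhiT Con Δ x y = y

/-- Skeptical nonmonotonic consequence: X |~ a iff a belongs to every extension of X. -/
def Nmc {α : Type*} (Con : Set α → Prop) (Δ : Set (Set α × α)) (X : Set α) (a : α) : Prop :=
  ∀ y : Set α, ExtT Con Δ X y → a ∈ y

/-- X |~ Y iff X |~ b for every b ∈ Y. -/
def NmcS {α : Type*} (Con : Set α → Prop) (Δ : Set (Set α × α)) (X Y : Set α) : Prop :=
  ∀ b ∈ Y, Nmc Con Δ X b



lemma finite_subset_iUnion_mono {α : Type*} {f : ℕ → Set α}
    (hmono : ∀ {i j : ℕ}, i ≤ j → f i ⊆ f j) {X : Set α} (hX : X.Finite)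
    (h : X ⊆ ⋃ n, f n) : ∃ n, X ⊆ f n := by
  revert h
  refine Set.Finite.induction_on (motive := fun s _ => s ⊆ ⋃ n, f n → ∃ n, s ⊆ f n) X hX (fun _ => ⟨0, by simp⟩) ?_
  intro a s ha hfin ih h
  obtain ⟨n, hn⟩ := ih (Set.Subset.trans (Set.subset_insert a s) h)
  obtain ⟨m, hm⟩ := Set.mem_iUnion.mp (h (Set.mem_insert a s))
  exact ⟨max n m, Set.insert_subset (hmono (le_max_right n m) hm)
    (hn.trans (hmono (le_max_left n m)))⟩


lemma phiT_mono_x {α : Type*} (Con : Set α → Prop) (Δ : Set (Set α × α)) {x x' : Set α}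
    (S : Set α) (h : x ⊆ x') : ∀ i, phiT Con Δ x S i ⊆ phiT Con Δ x' S i := by
  intro i
  induction i with
  | zero => exact h
  | succ i ih =>
    intro a ha
    rcases ha with ha | ⟨X, hX, hXs, hc⟩
    · exact Or.inl (ih ha)
    · exact Or.inr ⟨X, hX, fun b hb => ih (hXs hb), hc⟩

lemma phiT_mono_i {α : Type*} (Con : Set α → Prop) (Δ : Set (Set α × α)) (x S : Set α) :
    ∀ {i j}, i ≤ j → phiT Con Δ x S i ⊆ phiT Con Δ x S j := by
  intro i j h
  induction h with
  | refl => exact le_refl _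
  | step h ih => exact fun a ha => Or.inl (ih ha)

/-- if P ε R and Q ⊆ R, then (P ∪ Q) ε R. -/
theorem extension_absorbs {α : Type*} (Con : Set α → Prop) (Δ : Set (Set α × α))
    -- Con is a collection of finite subsets of A with ∅ ∈ Con, closed under
    -- subsets, containing every singleton
    (hCfin : ∀ X : Set α, Con X → X.Finite)
    (hCempty : Con ∅)
    (hCsub : ∀ X Y : Set α, X ⊆ Y → Con Y → Con X)
    (hCsing : ∀ a : α, Con {a})
    -- Δ is a set of normal default rules, each a pair (X, a) with X ∈ Con
    (hDelta : ∀ p ∈ Δ, Con p.1) :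
    ∀ P Q R : Set α, Con P → Con Q → ExtT Con Δ P R → Q ⊆ R →
      ExtT Con Δ (P ∪ Q) R := by
  intro P Q R hP hQ ⟨hRcons, hfix⟩ hQR
  have hPR : P ⊆ R := by
    rw [← hfix]; exact Set.subset_iUnion (phiT Con Δ P R) 0
  have hPQR : P ∪ Q ⊆ R := Set.union_subset hPR hQR
  refine ⟨hRcons, ?_⟩
  apply Set.Subset.antisymm
  · -- Φ(P∪Q,R) ⊆ R
    apply Set.iUnion_subset
    intro i
    induction i with
    | zero => exact hPQR
    | succ i ih =>
      intro a ha
      rcases ha with ha | ⟨X, hX, hXs, hc⟩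
      · exact ih ha
      · -- X ⊆ R, X finite, so X ⊆ phiT P R n for some n
        have hXfin : X.Finite := hCfin X (hDelta (X, a) hX)
        have hXR : X ⊆ R := fun b hb => ih (hXs hb)
        have hXR' : X ⊆ ⋃ n, phiT Con Δ P R n := by
          have : X ⊆ PhiT Con Δ P R := by rw [hfix]; exact hXR
          exact this
        obtain ⟨n, hn⟩ := finite_subset_iUnion_mono
          (fun h => phiT_mono_i Con Δ P R h) hXfin hXR'
        have : a ∈ phiT Con Δ P R (n + 1) := Or.inr ⟨X, hX, hn, hc⟩
        rw [← hfix]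
        exact Set.mem_iUnion.mpr ⟨n + 1, this⟩
  · -- R ⊆ Φ(P∪Q,R)
    conv_lhs => rw [← hfix]
    exact Set.iUnion_mono fun i => phiT_mono_x Con Δ R Set.subset_union_left i
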